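/- Let a, b ∈ ℝ≥0∞ and let a* := ∑' k, a^k. Then x = a*·b is the least solution of the equation x = a·x + b: it satisfies a·(a*·b) + b = a*·b, and for every y ∈ ℝ≥0∞ with y = a·y + b one has a*·b ≤ y. -/

import Mathlib

open scoped ENNReal

/-- For `a, b ∈ ℝ≥0∞`, the element `a* * b` (where `a* = ∑' k, a ^ k`) is
the least solution of the equation `x = a * x + b`. -/
theorem closure_mul_least_solution (a b : ℝ≥0∞) :
    a * ((∑' k : ℕ, a ^ k) * b) + b = (∑' k : ℕ, a ^ k) * b ∧
    ∀ y : ℝ≥0∞, y = a * y + b → (∑' k : ℕ, a ^ k) * b ≤ y := by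
  have hS : a * (∑' k : ℕ, a ^ k) + 1 = ∑' k : ℕ, a ^ k := by
    conv_rhs => rw [tsum_eq_zero_add' ENNReal.summable]
    rw [pow_zero, add_comm]
    congr 1
    rw [← ENNReal.tsum_mul_left]
    exact tsum_congr fun k => (pow_succ' a k).symm
  constructor
  · rw [← mul_assoc, ← one_mul b, ← mul_assoc, mul_one, ← add_mul, hS, one_mul]
  · intro y hy
    have hn : ∀ n : ℕ, (∑ k ∈ Finset.range n, a ^ k) * b ≤ y := by
      intro n
      induction n with
      | zero => simp
      | succ n ih =>
        rw [geom_sum_succ, add_mul, one_mul, mul_assoc, hy]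
        exact add_le_add_left (mul_le_mul_right ih a) b
    rw [ENNReal.tsum_eq_iSup_sum, ENNReal.iSup_mul]
    refine iSup_le fun s => ?_
    obtain ⟨n, hs⟩ := s.exists_nat_subset_range
    exact le_trans (mul_le_mul_left (Finset.sum_le_sum_of_subset hs) b) (hn n)
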